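/- Let r > 0 be real and let Γ ⊆ GL₃(ℂ) be the subgroup generated by h_X and h_Y. An element g ∈ Γ has lower-right 2×2 block equal to the identity 𝟏 if and only if g is the block matrix [[1, 0], [2·(a₀·𝟏 + a₁·𝐢 + a₂·𝐣 + a₃·𝐤)·v, 𝟏]] for some integers a₀, a₁, a₂, a₃ with a₀ + a₁ + a₂ + a₃ even; moreover every such block matrix belongs to Γ. -/

import Mathlib

open Matrix Complex

/-- The holonomy matrix `h_X`. -/
noncomputable def hX (r : ℝ) : Matrix (Fin 3) (Fin 3) ℂ :=
  !![1, 0, 0; (r : ℂ), 0, 1; (r : ℂ), -1, 0]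

/-- The holonomy matrix `h_Y`. -/
noncomputable def hY (r : ℝ) : Matrix (Fin 3) (Fin 3) ℂ :=
  !![1, 0, 0; -Complex.I * (r : ℂ), 0, -Complex.I; (r : ℂ), -Complex.I, 0]

/-- The quaternionic `2×2` matrices `𝟏, 𝐢, 𝐣, 𝐤`. -/
noncomputable def q1 : Matrix (Fin 2) (Fin 2) ℂ := !![1, 0; 0, 1]
noncomputable def qi : Matrix (Fin 2) (Fin 2) ℂ := !![0, 1; -1, 0]
noncomputable def qj : Matrix (Fin 2) (Fin 2) ℂ := !![0, -Complex.I; -Complex.I, 0]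
noncomputable def qk : Matrix (Fin 2) (Fin 2) ℂ := !![-Complex.I, 0; 0, Complex.I]

/-- The vector `v = (0, r) ∈ ℂ²`. -/
noncomputable def vvec (r : ℝ) : Fin 2 → ℂ := ![0, (r : ℂ)]

/-- The subgroup `Γ` of `GL₃(ℂ)` generated by `h_X` and `h_Y`. -/
noncomputable def Γgp (r : ℝ) : Subgroup (GL (Fin 3) ℂ) :=
  Subgroup.closure
    {g : GL (Fin 3) ℂ |
      (g : Matrix (Fin 3) (Fin 3) ℂ) = hX r ∨ (g : Matrix (Fin 3) (Fin 3) ℂ) = hY r}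

/-- The block matrix `[[1, 0], [2(a₀𝟏 + a₁𝐢 + a₂𝐣 + a₃𝐤)v, 𝟏]]`. -/
noncomputable def latticeMat (r : ℝ) (a₀ a₁ a₂ a₃ : ℤ) :
    Matrix (Fin 3) (Fin 3) ℂ :=
  !![1, 0, 0;
     ((2:ℂ) • ((a₀ • q1 + a₁ • qi + a₂ • qj + a₃ • qk) *ᵥ vvec r)) 0, 1, 0;
     ((2:ℂ) • ((a₀ • q1 + a₁ • qi + a₂ • qj + a₃ • qk) *ᵥ vvec r)) 1, 0, 1]


open Quaternion in
@[simp] lemma quat_mk_re (a₀ a₁ a₂ a₃ : ℤ) : (⟨a₀,a₁,a₂,a₃⟩ : ℍ[ℤ]).re = a₀ := rfl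
open Quaternion in
@[simp] lemma quat_mk_imI (a₀ a₁ a₂ a₃ : ℤ) : (⟨a₀,a₁,a₂,a₃⟩ : ℍ[ℤ]).imI = a₁ := rfl
open Quaternion in
@[simp] lemma quat_mk_imJ (a₀ a₁ a₂ a₃ : ℤ) : (⟨a₀,a₁,a₂,a₃⟩ : ℍ[ℤ]).imJ = a₂ := rfl
open Quaternion in
@[simp] lemma quat_mk_imK (a₀ a₁ a₂ a₃ : ℤ) : (⟨a₀,a₁,a₂,a₃⟩ : ℍ[ℤ]).imK = a₃ := rfl
open Quaternion in
@[simp] lemma quat_add_mk_re (x : ℍ[ℤ]) (a₀ a₁ a₂ a₃ : ℤ) :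
    (@HAdd.hAdd ℍ[ℤ] ℍ[ℤ] ℍ[ℤ] _ x (⟨a₀,a₁,a₂,a₃⟩ : ℍ[ℤ])).re = x.re + a₀ := rfl
open Quaternion in
@[simp] lemma quat_add_mk_imI (x : ℍ[ℤ]) (a₀ a₁ a₂ a₃ : ℤ) :
    (@HAdd.hAdd ℍ[ℤ] ℍ[ℤ] ℍ[ℤ] _ x (⟨a₀,a₁,a₂,a₃⟩ : ℍ[ℤ])).imI = x.imI + a₁ := rfl
open Quaternion in
@[simp] lemma quat_add_mk_imJ (x : ℍ[ℤ]) (a₀ a₁ a₂ a₃ : ℤ) :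
    (@HAdd.hAdd ℍ[ℤ] ℍ[ℤ] ℍ[ℤ] _ x (⟨a₀,a₁,a₂,a₃⟩ : ℍ[ℤ])).imJ = x.imJ + a₂ := rfl
open Quaternion in
@[simp] lemma quat_add_mk_imK (x : ℍ[ℤ]) (a₀ a₁ a₂ a₃ : ℤ) :
    (@HAdd.hAdd ℍ[ℤ] ℍ[ℤ] ℍ[ℤ] _ x (⟨a₀,a₁,a₂,a₃⟩ : ℍ[ℤ])).imK = x.imK + a₃ := rfl
open Quaternion in
@[simp] lemma quat_sub_mk_re (x : ℍ[ℤ]) (a₀ a₁ a₂ a₃ : ℤ) :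
    (@HSub.hSub ℍ[ℤ] ℍ[ℤ] ℍ[ℤ] _ x (⟨a₀,a₁,a₂,a₃⟩ : ℍ[ℤ])).re = x.re - a₀ := rfl
open Quaternion in
@[simp] lemma quat_sub_mk_imI (x : ℍ[ℤ]) (a₀ a₁ a₂ a₃ : ℤ) :
    (@HSub.hSub ℍ[ℤ] ℍ[ℤ] ℍ[ℤ] _ x (⟨a₀,a₁,a₂,a₃⟩ : ℍ[ℤ])).imI = x.imI - a₁ := rfl
open Quaternion in
@[simp] lemma quat_sub_mk_imJ (x : ℍ[ℤ]) (a₀ a₁ a₂ a₃ : ℤ) :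
    (@HSub.hSub ℍ[ℤ] ℍ[ℤ] ℍ[ℤ] _ x (⟨a₀,a₁,a₂,a₃⟩ : ℍ[ℤ])).imJ = x.imJ - a₂ := rfl
open Quaternion in
@[simp] lemma quat_sub_mk_imK (x : ℍ[ℤ]) (a₀ a₁ a₂ a₃ : ℤ) :
    (@HSub.hSub ℍ[ℤ] ℍ[ℤ] ℍ[ℤ] _ x (⟨a₀,a₁,a₂,a₃⟩ : ℍ[ℤ])).imK = x.imK - a₃ := rfl

open Quaternion in
@[simp] lemma quat_mk_add_mk_re (a₀ a₁ a₂ a₃ b₀ b₁ b₂ b₃ : ℤ) :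
    (@HAdd.hAdd ℍ[ℤ] ℍ[ℤ] ℍ[ℤ] _ (⟨a₀,a₁,a₂,a₃⟩ : ℍ[ℤ]) (⟨b₀,b₁,b₂,b₃⟩ : ℍ[ℤ])).re = a₀ + b₀ := rfl
open Quaternion in
@[simp] lemma quat_mk_add_mk_imI (a₀ a₁ a₂ a₃ b₀ b₁ b₂ b₃ : ℤ) :
    (@HAdd.hAdd ℍ[ℤ] ℍ[ℤ] ℍ[ℤ] _ (⟨a₀,a₁,a₂,a₃⟩ : ℍ[ℤ]) (⟨b₀,b₁,b₂,b₃⟩ : ℍ[ℤ])).imI = a₁ + b₁ := rfl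
open Quaternion in
@[simp] lemma quat_mk_add_mk_imJ (a₀ a₁ a₂ a₃ b₀ b₁ b₂ b₃ : ℤ) :
    (@HAdd.hAdd ℍ[ℤ] ℍ[ℤ] ℍ[ℤ] _ (⟨a₀,a₁,a₂,a₃⟩ : ℍ[ℤ]) (⟨b₀,b₁,b₂,b₃⟩ : ℍ[ℤ])).imJ = a₂ + b₂ := rfl
open Quaternion in
@[simp] lemma quat_mk_add_mk_imK (a₀ a₁ a₂ a₃ b₀ b₁ b₂ b₃ : ℤ) :
    (@HAdd.hAdd ℍ[ℤ] ℍ[ℤ] ℍ[ℤ] _ (⟨a₀,a₁,a₂,a₃⟩ : ℍ[ℤ]) (⟨b₀,b₁,b₂,b₃⟩ : ℍ[ℤ])).imK = a₃ + b₃ := rfl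

namespace GammaAux
open Quaternion

instance : DecidableEq ℍ[ℤ] := fun a b =>
  decidable_of_iff (a.re = b.re ∧ a.imI = b.imI ∧ a.imJ = b.imJ ∧ a.imK = b.imK)
    ⟨fun h => QuaternionAlgebra.ext h.1 h.2.1 h.2.2.1 h.2.2.2,
     fun h => by subst h; exact ⟨rfl, rfl, rfl, rfl⟩⟩

def uI : ℍ[ℤ] := ⟨0,1,0,0⟩
def uJ : ℍ[ℤ] := ⟨0,0,1,0⟩
def uK : ℍ[ℤ] := ⟨0,0,0,1⟩

def Q8 : List ℍ[ℤ] := [1, -1, uI, -uI, uJ, -uJ, uK, -uK]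

def sig (a : ℍ[ℤ]) : ZMod 2 := ((a.re + a.imI + a.imJ + a.imK : ℤ) : ZMod 2)
def eps (q : ℍ[ℤ]) : ZMod 2 := ((q.imI + q.imJ : ℤ) : ZMod 2)

lemma sig_add (a b : ℍ[ℤ]) : sig (a + b) = sig a + sig b := by
  simp only [sig, Quaternion.re_add, Quaternion.imI_add, Quaternion.imJ_add, Quaternion.imK_add]
  push_cast; ring

lemma sig_neg (a : ℍ[ℤ]) : sig (-a) = sig a := by
  simp only [sig, Quaternion.re_neg, Quaternion.imI_neg, Quaternion.imJ_neg, Quaternion.imK_neg]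
  push_cast
  ring_nf
  simp only [sub_eq_add_neg, CharTwo.neg_eq]

lemma sig_mul (a b : ℍ[ℤ]) : sig (a * b) = sig a * sig b := by
  simp only [sig, Quaternion.re_mul, Quaternion.imI_mul, Quaternion.imJ_mul, Quaternion.imK_mul]
  push_cast
  ring_nf
  simp only [sub_eq_add_neg, CharTwo.neg_eq]

lemma Q8_mul : ∀ q ∈ Q8, ∀ q' ∈ Q8, q * q' ∈ Q8 := by decide
lemma Q8_star : ∀ q ∈ Q8, star q ∈ Q8 := by decide
lemma Q8_norm : ∀ q ∈ Q8, q * star q = 1 := by decide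
lemma Q8_norm' : ∀ q ∈ Q8, star q * q = 1 := by decide
lemma Q8_sig : ∀ q ∈ Q8, sig q = 1 := by decide
lemma Q8_eps_star : ∀ q ∈ Q8, eps (star q) = eps q := by decide
lemma Q8_eps_mul : ∀ q ∈ Q8, ∀ q' ∈ Q8, eps (q * q') = eps q + eps q' := by decide

/-- The key matrix parametrization of elements of `Γ`. -/
noncomputable def Emat (r : ℝ) (q a : ℍ[ℤ]) : Matrix (Fin 3) (Fin 3) ℂ :=
  !![1, 0, 0;
     (((a+a+q-1).imI : ℂ) - ((a+a+q-1).imJ : ℂ) * Complex.I) * r,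
       ((q.re : ℤ) : ℂ) - (q.imK : ℂ) * Complex.I, ((q.imI : ℤ) : ℂ) - (q.imJ : ℂ) * Complex.I;
     (((a+a+q-1).re : ℂ) + ((a+a+q-1).imK : ℂ) * Complex.I) * r,
       (-(q.imI : ℤ) : ℂ) - (q.imJ : ℂ) * Complex.I, ((q.re : ℤ) : ℂ) + (q.imK : ℂ) * Complex.I]

set_option maxHeartbeats 2000000 in
theorem Emat_mul (r : ℝ) (q a q' a' : ℍ[ℤ]) :
    Emat r q a * Emat r q' a' = Emat r (q * q') (a + q * a') := by
  rw [Emat, Emat, Emat, Matrix.mul_fin_three]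
  ext i j
  fin_cases i <;> fin_cases j <;>
    · simp only [Matrix.cons_val', Matrix.cons_val_zero, Matrix.cons_val_one, Matrix.head_cons,
        Matrix.head_fin_const, Matrix.empty_val', Matrix.cons_val_fin_one, Matrix.head_val',
        Matrix.cons_val_two, Matrix.tail_cons, Matrix.tail_val', Matrix.of_apply, Fin.mk_zero,
        Fin.mk_one,
        Quaternion.re_mul, Quaternion.imI_mul, Quaternion.imJ_mul, Quaternion.imK_mul,
        Quaternion.re_add, Quaternion.imI_add, Quaternion.imJ_add, Quaternion.imK_add,
        Quaternion.re_sub, Quaternion.imI_sub, Quaternion.imJ_sub, Quaternion.imK_sub,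
        Quaternion.re_one, Quaternion.imI_one, Quaternion.imJ_one, Quaternion.imK_one]
      push_cast
      ring_nf
      try (simp only [Complex.I_sq]; ring_nf)

theorem Emat_one (r : ℝ) : Emat r 1 0 = 1 := by
  ext i j
  fin_cases i <;> fin_cases j <;>
    simp [Emat, Matrix.one_apply, Matrix.vecHead, Matrix.vecTail]

theorem Emat_uI (r : ℝ) : Emat r uI 1 = hX r := by
  ext i j
  fin_cases i <;> fin_cases j <;> simp [Emat, hX, uI]

theorem Emat_uJ (r : ℝ) : Emat r uJ 1 = hY r := by
  ext i j
  fin_cases i <;> fin_cases j <;> simp [Emat, hY, uJ]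

/-- Units of the matrix ring built from the parametrization. -/
noncomputable def mkU (r : ℝ) (q a q' a' : ℍ[ℤ]) (h1 : q * q' = 1) (h2 : a + q * a' = 0)
    (h3 : q' * q = 1) (h4 : a' + q' * a = 0) : GL (Fin 3) ℂ :=
  ⟨Emat r q a, Emat r q' a', by rw [Emat_mul, h1, h2, Emat_one],
    by rw [Emat_mul, h3, h4, Emat_one]⟩

noncomputable def Xg (r : ℝ) : GL (Fin 3) ℂ :=
  mkU r uI 1 (-uI) uI (by decide) (by decide) (by decide) (by decide)

noncomputable def Yg (r : ℝ) : GL (Fin 3) ℂ :=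
  mkU r uJ 1 (-uJ) uJ (by decide) (by decide) (by decide) (by decide)

lemma Xg_mem (r : ℝ) : Xg r ∈ Γgp r :=
  Subgroup.subset_closure (Or.inl (Emat_uI r))

lemma Yg_mem (r : ℝ) : Yg r ∈ Γgp r :=
  Subgroup.subset_closure (Or.inr (Emat_uJ r))

lemma Xg_coe (r : ℝ) : ((Xg r : GL (Fin 3) ℂ) : Matrix (Fin 3) (Fin 3) ℂ) = Emat r uI 1 := rfl
lemma Yg_coe (r : ℝ) : ((Yg r : GL (Fin 3) ℂ) : Matrix (Fin 3) (Fin 3) ℂ) = Emat r uJ 1 := rfl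

/-- If `g` has matrix `Emat r q a` with `q` a unit quaternion, then `g⁻¹` has matrix
`Emat r (star q) (-(star q * a))`. -/
lemma coe_inv_Emat {r : ℝ} {g : GL (Fin 3) ℂ} {q a : ℍ[ℤ]} (hn : q * star q = 1)
    (hg : (g : Matrix (Fin 3) (Fin 3) ℂ) = Emat r q a) :
    ((g⁻¹ : GL (Fin 3) ℂ) : Matrix (Fin 3) (Fin 3) ℂ) = Emat r (star q) (-(star q * a)) := by
  have key : (g : Matrix (Fin 3) (Fin 3) ℂ) * Emat r (star q) (-(star q * a)) = 1 := by
    have h4 : a + q * -(star q * a) = 0 := by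
      rw [mul_neg, ← mul_assoc, hn, one_mul, add_neg_cancel]
    rw [hg, Emat_mul, hn, h4, Emat_one]
  rw [Matrix.coe_units_inv, Matrix.inv_eq_right_inv key]

/-- Main invariant via closure induction. -/
lemma main_inv (r : ℝ) : ∀ g ∈ Γgp r, ∃ q a : ℍ[ℤ], q ∈ Q8 ∧ eps q = sig a ∧
    (g : Matrix (Fin 3) (Fin 3) ℂ) = Emat r q a := by
  intro g hg
  induction hg using Subgroup.closure_induction with
  | mem x hx =>
    rcases hx with hx | hx
    · exact ⟨uI, 1, by decide, by decide, by rw [hx, Emat_uI]⟩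
    · exact ⟨uJ, 1, by decide, by decide, by rw [hx, Emat_uJ]⟩
  | one => exact ⟨1, 0, by decide, by decide, by rw [Units.val_one, Emat_one]⟩
  | mul x y hx hy ihx ihy =>
    obtain ⟨q, a, hq, he, hE⟩ := ihx
    obtain ⟨q', a', hq', he', hE'⟩ := ihy
    refine ⟨q * q', a + q * a', Q8_mul q hq q' hq', ?_, ?_⟩
    · rw [Q8_eps_mul q hq q' hq', he, he', sig_add, sig_mul, Q8_sig q hq, one_mul]
    · rw [Units.val_mul, hE, hE', Emat_mul]
  | inv x hx ihx =>
    obtain ⟨q, a, hq, he, hE⟩ := ihx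
    refine ⟨star q, -(star q * a), Q8_star q hq, ?_, coe_inv_Emat (Q8_norm q hq) hE⟩
    rw [Q8_eps_star q hq, he, sig_neg, sig_mul, Q8_sig (star q) (Q8_star q hq), one_mul]

/-- The translation subgroup: quaternions `a` whose translate `Emat r 1 a` lies in `Γ`. -/
noncomputable def Tgrp (r : ℝ) : AddSubgroup ℍ[ℤ] where
  carrier := {a | ∃ g ∈ Γgp r, (g : Matrix (Fin 3) (Fin 3) ℂ) = Emat r 1 a}
  zero_mem' := ⟨1, Subgroup.one_mem _, by rw [Units.val_one, Emat_one]⟩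
  add_mem' := by
    rintro a b ⟨g, hg, hgE⟩ ⟨g', hg', hgE'⟩
    exact ⟨g * g', mul_mem hg hg',
      by rw [Units.val_mul, hgE, hgE', Emat_mul, one_mul, one_mul]⟩
  neg_mem' := by
    rintro a ⟨g, hg, hgE⟩
    refine ⟨g⁻¹, inv_mem hg, ?_⟩
    have := coe_inv_Emat (by decide : (1 : ℍ[ℤ]) * star 1 = 1) hgE
    simpa using this

lemma Tgrp_unit_mul {r : ℝ} {u c : ℍ[ℤ]} (hn : u * star u = 1)
    (γ : GL (Fin 3) ℂ) (hγ : γ ∈ Γgp r) (hγE : (γ : Matrix (Fin 3) (Fin 3) ℂ) = Emat r u c)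
    {a : ℍ[ℤ]} (ha : a ∈ Tgrp r) : u * a ∈ Tgrp r := by
  obtain ⟨g, hg, hgE⟩ := ha
  refine ⟨γ * g * γ⁻¹, mul_mem (mul_mem hγ hg) (inv_mem hγ), ?_⟩
  rw [Units.val_mul, Units.val_mul, hγE, hgE, coe_inv_Emat hn hγE,
    Emat_mul, Emat_mul]
  have h1 : u * 1 * star u = 1 := by rw [mul_one, hn]
  have h2 : c + u * a + u * 1 * -(star u * c) = u * a := by
    rw [mul_one, mul_neg, ← mul_assoc, hn, one_mul]
    abel
  rw [h1, h2]

lemma Tgrp_uI_mul {r : ℝ} {a : ℍ[ℤ]} (ha : a ∈ Tgrp r) : uI * a ∈ Tgrp r :=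
  Tgrp_unit_mul (by decide) (Xg r) (Xg_mem r) (Xg_coe r) ha

lemma Tgrp_uJ_mul {r : ℝ} {a : ℍ[ℤ]} (ha : a ∈ Tgrp r) : uJ * a ∈ Tgrp r :=
  Tgrp_unit_mul (by decide) (Yg r) (Yg_mem r) (Yg_coe r) ha

lemma Tgrp_uK_mul {r : ℝ} {a : ℍ[ℤ]} (ha : a ∈ Tgrp r) : uK * a ∈ Tgrp r := by
  have := Tgrp_uI_mul (Tgrp_uJ_mul ha)
  rwa [← mul_assoc, show uI * uJ = uK by decide] at this

lemma Tgrp_base1 (r : ℝ) : uI - uJ ∈ Tgrp r := by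
  refine ⟨Xg r * Xg r * Yg r * Yg r,
    mul_mem (mul_mem (mul_mem (Xg_mem r) (Xg_mem r)) (Yg_mem r)) (Yg_mem r), ?_⟩
  rw [Units.val_mul, Units.val_mul, Units.val_mul, Xg_coe, Yg_coe,
    Emat_mul, Emat_mul, Emat_mul]
  congr 1 <;> decide

lemma Tgrp_base2 (r : ℝ) : uJ + uK ∈ Tgrp r := by
  refine ⟨Xg r * Yg r * Xg r * Yg r * Xg r * Xg r, ?_, ?_⟩
  · exact mul_mem (mul_mem (mul_mem (mul_mem (mul_mem (Xg_mem r) (Yg_mem r)) (Xg_mem r))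
      (Yg_mem r)) (Xg_mem r)) (Xg_mem r)
  · rw [Units.val_mul, Units.val_mul, Units.val_mul, Units.val_mul, Units.val_mul,
      Xg_coe, Yg_coe, Emat_mul, Emat_mul, Emat_mul, Emat_mul, Emat_mul]
    congr 1 <;> decide

lemma Tgrp_e1 (r : ℝ) : 1 - uK ∈ Tgrp r := by
  have := Tgrp_uJ_mul (Tgrp_base1 r)
  rwa [show uJ * (uI - uJ) = 1 - uK by decide] at this

lemma Tgrp_e2 (r : ℝ) : uI + uJ ∈ Tgrp r := by
  have := Tgrp_uK_mul (Tgrp_base1 r)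
  rwa [show uK * (uI - uJ) = uI + uJ by decide] at this

lemma Tgrp_e4 (r : ℝ) : uK + uK ∈ Tgrp r := by
  have h1 : (1 : ℍ[ℤ]) + uK ∈ Tgrp r := by
    have := neg_mem (Tgrp_uI_mul (Tgrp_base1 r))
    rwa [show -(uI * (uI - uJ)) = 1 + uK by decide] at this
  have h2 : (1 : ℍ[ℤ]) + 1 ∈ Tgrp r := by
    have := add_mem (Tgrp_e1 r) h1
    rwa [show ((1:ℍ[ℤ]) - uK) + (1 + uK) = 1 + 1 by decide] at this
  have := Tgrp_uK_mul h2
  rwa [show uK * ((1:ℍ[ℤ]) + 1) = uK + uK by decide] at this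

/-- Every even quaternion is in the translation subgroup. -/
lemma Tgrp_even (r : ℝ) (a₀ a₁ a₂ a₃ m : ℤ) (hm : a₀ + a₁ + a₂ + a₃ = m + m) :
    (⟨a₀, a₁, a₂, a₃⟩ : ℍ[ℤ]) ∈ Tgrp r := by
  have key : (⟨a₀, a₁, a₂, a₃⟩ : ℍ[ℤ]) =
      a₀ • ((1 : ℍ[ℤ]) - uK) + a₁ • (uI + uJ) + (a₂ - a₁) • (uJ + uK) + (m - a₂) • (uK + uK) := by
    ext <;>
      simp [uI, uJ, uK, Quaternion.re_add, Quaternion.imI_add, Quaternion.imJ_add,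
        Quaternion.imK_add, Quaternion.re_sub, Quaternion.imI_sub, Quaternion.imJ_sub,
        Quaternion.imK_sub] <;>
      ring_nf <;> omega
  rw [key]
  exact add_mem (add_mem (add_mem (zsmul_mem (Tgrp_e1 r) a₀) (zsmul_mem (Tgrp_e2 r) a₁))
    (zsmul_mem (Tgrp_base2 r) (a₂ - a₁))) (zsmul_mem (Tgrp_e4 r) (m - a₂))

/-- `Emat` with trivial unit part equals `latticeMat`. -/
lemma Emat_one_lattice (r : ℝ) (a₀ a₁ a₂ a₃ : ℤ) :
    Emat r 1 ⟨a₀, a₁, a₂, a₃⟩ = latticeMat r a₀ a₁ a₂ a₃ := by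
  ext i j
  fin_cases i <;> fin_cases j <;>
    · simp [Emat, latticeMat, q1, qi, qj, qk, vvec, Matrix.mulVec, dotProduct,
        Fin.sum_univ_two, Quaternion.re_add, Quaternion.imI_add, Quaternion.imJ_add,
        Quaternion.imK_add, Quaternion.re_sub, Quaternion.imI_sub, Quaternion.imJ_sub,
        Quaternion.imK_sub]
      try push_cast
      try ring

end GammaAux

set_option maxHeartbeats 1000000

/-- For `r > 0`: an element `g ∈ Γ` has lower-right `2×2` block equal to `𝟏`
if and only if `g = [[1,0],[2(a₀𝟏+a₁𝐢+a₂𝐣+a₃𝐤)v, 𝟏]]` for integers `aᵢ` with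
even sum; moreover every such block matrix belongs to `Γ`. -/
theorem gamma_kernel_characterization (r : ℝ) (hr : 0 < r) :
    (∀ g ∈ Γgp r,
      ((∀ i j : Fin 2, (g : Matrix (Fin 3) (Fin 3) ℂ) i.succ j.succ
          = (1 : Matrix (Fin 2) (Fin 2) ℂ) i j)
        ↔ ∃ a₀ a₁ a₂ a₃ : ℤ, Even (a₀ + a₁ + a₂ + a₃) ∧
            (g : Matrix (Fin 3) (Fin 3) ℂ) = latticeMat r a₀ a₁ a₂ a₃))
    ∧ ∀ a₀ a₁ a₂ a₃ : ℤ, Even (a₀ + a₁ + a₂ + a₃) →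
        ∃ g ∈ Γgp r, (g : Matrix (Fin 3) (Fin 3) ℂ) = latticeMat r a₀ a₁ a₂ a₃ := by
  constructor
  · intro g hg
    obtain ⟨q, a, hq, he, hE⟩ := GammaAux.main_inv r g hg
    constructor
    · intro hblk
      have h11 := hblk 0 0
      have h12 := hblk 0 1
      rw [hE] at h11 h12
      simp only [Fin.succ_zero_eq_one, Fin.succ_one_eq_two] at h11 h12
      simp only [GammaAux.Emat, Matrix.cons_val', Matrix.cons_val_zero, Matrix.cons_val_one,
        Matrix.head_cons, Matrix.empty_val', Matrix.cons_val_fin_one, Matrix.head_val',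
        Matrix.cons_val_two, Matrix.tail_cons, Matrix.of_apply, Matrix.one_apply,
        if_true, if_false] at h11 h12
      norm_num [Complex.ext_iff] at h11 h12
      have hq1 : q = 1 := by
        ext <;> simp [h11.1, h11.2, h12.1, h12.2, Quaternion.re_one, Quaternion.imI_one,
          Quaternion.imJ_one, Quaternion.imK_one]
      rw [hq1] at hE he
      have hsig : GammaAux.sig a = 0 := by
        rw [← he]; decide
      have hsig' : ((a.re + a.imI + a.imJ + a.imK : ℤ) : ZMod 2) = 0 := hsig
      have heven : Even (a.re + a.imI + a.imJ + a.imK) := by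
        obtain ⟨c, hc⟩ := (ZMod.intCast_zmod_eq_zero_iff_dvd _ 2).mp hsig'
        exact ⟨c, by omega⟩
      obtain ⟨a₀, a₁, a₂, a₃⟩ := a
      exact ⟨a₀, a₁, a₂, a₃, heven, by rw [hE, GammaAux.Emat_one_lattice]⟩
    · rintro ⟨a₀, a₁, a₂, a₃, -, hEq⟩ i j
      rw [hEq]
      fin_cases i <;> fin_cases j <;>
        simp [latticeMat, Matrix.one_apply]
  · rintro a₀ a₁ a₂ a₃ ⟨m, hm⟩
    obtain ⟨g, hg, hgE⟩ := GammaAux.Tgrp_even r a₀ a₁ a₂ a₃ m hm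
    exact ⟨g, hg, by rw [hgE, GammaAux.Emat_one_lattice]⟩
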